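/- Let d ≥ 1, k ≥ 1, and let x, y ∈ (ℝ^d)^k. Then the infimum over all isometries g of ℝ^d of ‖x − g·y‖ (with g acting diagonally on the k components and ‖·‖ the Euclidean norm on (ℝ^d)^k) is attained: there exists an isometry g₀ of ℝ^d such that ‖x − g₀·y‖ = inf over isometries g of ‖x − g·y‖. -/

import Mathlib

open MeasureTheory Matrix

noncomputable section

/-- `ℝ^d` with the Euclidean norm. -/
abbrev Pt (d : ℕ) := EuclideanSpace ℝ (Fin d)

/-- `(ℝ^d)^k` with the Euclidean norm. -/
abbrev Cfg (d k : ℕ) := PiLp 2 fun _ : Fin k => Pt d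

instance (d k : ℕ) : MeasurableSpace (Cfg d k) :=
  MeasurableSpace.comap WithLp.ofLp (inferInstance : MeasurableSpace (∀ _ : Fin k, Pt d))

/-- The diagonal action of an isometry `g` of `ℝ^d` on `(ℝ^d)^k`:
`g·(x₁,…,x_k) = (g x₁, …, g x_k)`. -/
def diagAct {d k : ℕ} (g : Pt d ≃ᵢ Pt d) (x : Cfg d k) : Cfg d k := WithLp.toLp 2 fun i => g (x i)

/-- `d(x,y) :=` the infimum over all isometries `g` of `ℝ^d` of `‖x − g·y‖`. -/
def confDist {d k : ℕ} (x y : Cfg d k) : ℝ :=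
  ⨅ g : Pt d ≃ᵢ Pt d, ‖x - diagAct g y‖

/-- The action of `ρ ∈ O(d)` on a vector of `ℝ^d`. -/
def rotAct {d : ℕ} (ρ : orthogonalGroup (Fin d) ℝ) (v : Pt d) : Pt d :=
  Matrix.toEuclideanCLM (𝕜 := ℝ) (ρ : Matrix (Fin d) (Fin d) ℝ) v

/-- The distance on `O(d)` induced by the operator norm on `d × d` matrices. -/
def opDist {d : ℕ} (ρ σ : orthogonalGroup (Fin d) ℝ) : ℝ :=
  ‖Matrix.toEuclideanCLM (𝕜 := ℝ) (ρ : Matrix (Fin d) (Fin d) ℝ)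
    - Matrix.toEuclideanCLM (𝕜 := ℝ) (σ : Matrix (Fin d) (Fin d) ℝ)‖

instance (d : ℕ) : MeasurableSpace (orthogonalGroup (Fin d) ℝ) := borel _
instance (d : ℕ) : BorelSpace (orthogonalGroup (Fin d) ℝ) := ⟨rfl⟩

instance (d : ℕ) : IsTopologicalGroup (orthogonalGroup (Fin d) ℝ) where
  continuous_inv := continuous_induced_rng.mpr <|
    (continuous_star.comp continuous_subtype_val : _)

theorem isCompact_orthogonalGroup (d : ℕ) :
    IsCompact (orthogonalGroup (Fin d) ℝ : Set (Matrix (Fin d) (Fin d) ℝ)) := by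
  have hsub : (orthogonalGroup (Fin d) ℝ : Set (Matrix (Fin d) (Fin d) ℝ)) ⊆
      Set.pi Set.univ fun _ : Fin d => Set.pi Set.univ fun _ : Fin d => Set.Icc (-1 : ℝ) 1 := by
    intro U hU i _ j _
    have := entry_norm_bound_of_unitary hU i j
    rw [Real.norm_eq_abs] at this
    constructor <;> linarith [abs_le.mp this]
  have hclosed : IsClosed (orthogonalGroup (Fin d) ℝ : Set (Matrix (Fin d) (Fin d) ℝ)) := by
    have heq : (orthogonalGroup (Fin d) ℝ : Set (Matrix (Fin d) (Fin d) ℝ)) =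
        {U | star U * U = 1} ∩ {U | U * star U = 1} := by
      ext U
      exact Unitary.mem_iff
    rw [heq]
    exact (isClosed_eq ((continuous_star.comp continuous_id).matrix_mul continuous_id)
        continuous_const).inter
      (isClosed_eq (continuous_id.matrix_mul (continuous_star.comp continuous_id))
        continuous_const)
  have hcpt : IsCompact (Set.pi Set.univ fun _ : Fin d => Set.pi Set.univ
      fun _ : Fin d => Set.Icc (-1 : ℝ) 1) :=
    isCompact_univ_pi fun _ => isCompact_univ_pi fun _ => isCompact_Icc
  exact hcpt.of_isClosed_subset hclosed hsub

instance (d : ℕ) : CompactSpace (orthogonalGroup (Fin d) ℝ) :=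
  isCompact_iff_compactSpace.mp (isCompact_orthogonalGroup d)

set_option synthInstance.maxHeartbeats 1000000 in
instance (d : ℕ) : LocallyCompactSpace (orthogonalGroup (Fin d) ℝ) := inferInstance

/-- The Haar measure on `O(d)`. -/
def haarOd (d : ℕ) : Measure (orthogonalGroup (Fin d) ℝ) := Measure.haar

-- unitary CLM from orthogonal matrix
lemma clm_unitary {d : ℕ} {ρ : Matrix (Fin d) (Fin d) ℝ} (hρ : ρ ∈ orthogonalGroup (Fin d) ℝ) :
    Matrix.toEuclideanCLM (𝕜 := ℝ) ρ ∈ unitary (Pt d →L[ℝ] Pt d) := by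
  rw [Unitary.mem_iff] at hρ ⊢
  constructor
  · rw [← map_star, ← _root_.map_mul, hρ.1, _root_.map_one]
  · rw [← map_star, ← _root_.map_mul, hρ.2, _root_.map_one]

lemma norm_clm_apply {d : ℕ} {ρ : Matrix (Fin d) (Fin d) ℝ} (hρ : ρ ∈ orthogonalGroup (Fin d) ℝ)
    (v : Pt d) : ‖Matrix.toEuclideanCLM (𝕜 := ℝ) ρ v‖ = ‖v‖ :=
  ContinuousLinearMap.norm_map_of_mem_unitary (clm_unitary hρ) v

def isomOf {d : ℕ} (ρ : Matrix (Fin d) (Fin d) ℝ) (hρ : ρ ∈ orthogonalGroup (Fin d) ℝ)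
    (c : Pt d) : Pt d ≃ᵢ Pt d where
  toFun v := Matrix.toEuclideanCLM (𝕜 := ℝ) ρ v + c
  invFun w := Matrix.toEuclideanCLM (𝕜 := ℝ) (star ρ) (w - c)
  left_inv v := by
    have : Matrix.toEuclideanCLM (𝕜 := ℝ) (star ρ) (Matrix.toEuclideanCLM (𝕜 := ℝ) ρ v) =
        (Matrix.toEuclideanCLM (𝕜 := ℝ) (star ρ * ρ)) v := by rw [_root_.map_mul]; rfl
    simp only [add_sub_cancel_right, this, (Unitary.mem_iff.mp hρ).1, _root_.map_one,
      ContinuousLinearMap.one_apply]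
  right_inv w := by
    have : Matrix.toEuclideanCLM (𝕜 := ℝ) ρ (Matrix.toEuclideanCLM (𝕜 := ℝ) (star ρ) (w - c)) =
        (Matrix.toEuclideanCLM (𝕜 := ℝ) (ρ * star ρ)) (w - c) := by rw [_root_.map_mul]; rfl
    simp only [this, (Unitary.mem_iff.mp hρ).2, _root_.map_one, ContinuousLinearMap.one_apply,
      sub_add_cancel]
  isometry_toFun := by
    intro v w
    simp only [edist_dist, dist_eq_norm, add_sub_add_right_eq_sub, ← map_sub]
    rw [norm_clm_apply hρ]

set_option synthInstance.maxHeartbeats 200000 in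
lemma exists_decomp {d : ℕ} (g : Pt d ≃ᵢ Pt d) :
    ∃ ρ ∈ orthogonalGroup (Fin d) ℝ, ∃ c : Pt d, ∀ v,
      g v = Matrix.toEuclideanCLM (𝕜 := ℝ) ρ v + c := by
  set L := g.toRealLinearIsometryEquiv
  set B : Pt d →L[ℝ] Pt d := (L : Pt d →L[ℝ] Pt d) with hB
  have hBu : B ∈ unitary (Pt d →L[ℝ] Pt d) := (Unitary.linearIsometryEquiv.symm L).property
  refine ⟨(Matrix.toEuclideanCLM (𝕜 := ℝ)).symm B, ?_, g 0, fun v => ?_⟩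
  · rw [Unitary.mem_iff] at hBu ⊢
    constructor
    · rw [← map_star, ← _root_.map_mul, hBu.1, _root_.map_one]
    · rw [← map_star, ← _root_.map_mul, hBu.2, _root_.map_one]
  · rw [StarAlgEquiv.apply_symm_apply]
    have : B v = g v - g 0 := g.toRealLinearIsometryEquiv_apply v
    rw [this]; abel

lemma norm_coord_le {d k : ℕ} (z : Cfg d k) (i : Fin k) : ‖z i‖ ≤ ‖z‖ := by
  have h2 : ‖z‖ ^ 2 = ∑ j, ‖z j‖ ^ 2 := PiLp.norm_sq_eq_of_L2 _ z
  have h1 : ‖z i‖ ^ 2 ≤ ‖z‖ ^ 2 := by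
    rw [h2]
    exact Finset.single_le_sum (f := fun j => ‖z j‖ ^ 2)
      (fun j _ => sq_nonneg _) (Finset.mem_univ i)
  calc ‖z i‖ = Real.sqrt (‖z i‖ ^ 2) := (Real.sqrt_sq (norm_nonneg _)).symm
    _ ≤ Real.sqrt (‖z‖ ^ 2) := Real.sqrt_le_sqrt h1
    _ = ‖z‖ := Real.sqrt_sq (norm_nonneg _)

def cfgL {d k : ℕ} (y : Cfg d k) : (Matrix (Fin d) (Fin d) ℝ × Pt d) →ₗ[ℝ] Cfg d k where
  toFun p := WithLp.toLp 2 fun i => Matrix.toEuclideanCLM (𝕜 := ℝ) p.1 (y i) + p.2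
  map_add' p q := by
    refine PiLp.ext fun i => ?_
    show Matrix.toEuclideanCLM (𝕜 := ℝ) (p.1 + q.1) (y i) + (p.2 + q.2) =
      (Matrix.toEuclideanCLM (𝕜 := ℝ) p.1 (y i) + p.2) +
      (Matrix.toEuclideanCLM (𝕜 := ℝ) q.1 (y i) + q.2)
    rw [_root_.map_add, ContinuousLinearMap.add_apply]
    abel
  map_smul' r p := by
    refine PiLp.ext fun i => ?_
    show Matrix.toEuclideanCLM (𝕜 := ℝ) (r • p.1) (y i) + r • p.2 =
      r • (Matrix.toEuclideanCLM (𝕜 := ℝ) p.1 (y i) + p.2)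
    rw [_root_.map_smul, ContinuousLinearMap.smul_apply, smul_add]

set_option maxHeartbeats 2000000 in
set_option synthInstance.maxHeartbeats 200000 in
/-- The infimum over isometries `g` of `ℝ^d` of `‖x − g·y‖` is attained. -/
theorem stmt4 (d k : ℕ) (hd : 1 ≤ d) (hk : 1 ≤ k) (x y : Cfg d k) :
    ∃ g₀ : Pt d ≃ᵢ Pt d, ‖x - diagAct g₀ y‖ = confDist x y := by
  classical
  set m := confDist x y with hm
  have hbdd : BddBelow (Set.range fun g : Pt d ≃ᵢ Pt d => ‖x - diagAct g y‖) :=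
    ⟨0, by rintro r ⟨g, rfl⟩; exact norm_nonneg _⟩
  have hle : ∀ g : Pt d ≃ᵢ Pt d, m ≤ ‖x - diagAct g y‖ := fun g => ciInf_le hbdd g
  have hm0 : 0 ≤ m := Real.iInf_nonneg fun g => norm_nonneg _
  set i0 : Fin k := ⟨0, hk⟩ with hi0
  set R : ℝ := ‖x i0‖ + ‖y i0‖ + (m + 1) with hR
  have hR0 : 0 ≤ R := by
    have := norm_nonneg (x i0); have := norm_nonneg (y i0); linarith
  set f : Matrix (Fin d) (Fin d) ℝ × Pt d → ℝ := fun p => ‖x - cfgL y p‖ with hf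
  have : ContinuousSMul ℝ (Cfg d k) := IsBoundedSMul.continuousSMul
  have hfc : Continuous f := (continuous_const.sub (cfgL y).continuous_of_finiteDimensional).norm
  set S := (orthogonalGroup (Fin d) ℝ : Set (Matrix (Fin d) (Fin d) ℝ)) ×ˢ
    Metric.closedBall (0 : Pt d) R with hS
  have hScpt : IsCompact S :=
    (isCompact_orthogonalGroup d).prod (isCompact_closedBall _ _)
  have hSne : S.Nonempty := ⟨(1, 0), ⟨one_mem _, Metric.mem_closedBall_self hR0⟩⟩
  obtain ⟨p₀, hp₀S, hmin⟩ := hScpt.exists_isMinOn hSne hfc.continuousOn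
  have hρ₀ : p₀.1 ∈ orthogonalGroup (Fin d) ℝ := hp₀S.1
  refine ⟨isomOf p₀.1 hρ₀ p₀.2, ?_⟩
  have hval : ‖x - diagAct (isomOf p₀.1 hρ₀ p₀.2) y‖ = f p₀ := rfl
  refine le_antisymm ?_ (hle _)
  rw [hval]
  by_contra hcon
  push_neg at hcon
  set ε := min (f p₀ - m) 1 with hε
  have hε1 : ε ≤ 1 := min_le_right _ _
  have hε2 : ε ≤ f p₀ - m := min_le_left _ _
  have hε0 : 0 < ε := lt_min (by linarith) one_pos
  have hlt' : confDist x y < m + ε := by rw [← hm]; linarith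
  obtain ⟨g, hg⟩ := exists_lt_of_ciInf_lt hlt'
  obtain ⟨ρ, hρ, c, hgv⟩ := exists_decomp g
  have hdg : diagAct g y = cfgL y (ρ, c) := PiLp.ext fun i => hgv (y i)
  have hlt : f (ρ, c) < m + ε := by rw [hf]; simp only; rw [← hdg]; exact hg
  have hco : ‖(x - cfgL y (ρ, c)) i0‖ ≤ f (ρ, c) := norm_coord_le _ i0
  have hsub : (x - cfgL y (ρ, c)) i0 =
      x i0 - (Matrix.toEuclideanCLM (𝕜 := ℝ) ρ (y i0) + c) := rfl
  have hu : ‖x i0 - (Matrix.toEuclideanCLM (𝕜 := ℝ) ρ (y i0) + c)‖ ≤ m + 1 := by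
    rw [← hsub]; calc ‖(x - cfgL y (ρ, c)) i0‖ ≤ f (ρ, c) := hco
      _ ≤ m + ε := le_of_lt hlt
      _ ≤ m + 1 := by linarith
  have hnormA : ‖Matrix.toEuclideanCLM (𝕜 := ℝ) ρ (y i0)‖ = ‖y i0‖ := norm_clm_apply hρ _
  have hcb : ‖c‖ ≤ R := by
    have hcid : c = x i0 - (x i0 - (Matrix.toEuclideanCLM (𝕜 := ℝ) ρ (y i0) + c))
        - Matrix.toEuclideanCLM (𝕜 := ℝ) ρ (y i0) := by abel
    calc ‖c‖ = ‖x i0 - (x i0 - (Matrix.toEuclideanCLM (𝕜 := ℝ) ρ (y i0) + c))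
        - Matrix.toEuclideanCLM (𝕜 := ℝ) ρ (y i0)‖ := by rw [← hcid]
      _ ≤ ‖x i0 - (x i0 - (Matrix.toEuclideanCLM (𝕜 := ℝ) ρ (y i0) + c))‖
          + ‖Matrix.toEuclideanCLM (𝕜 := ℝ) ρ (y i0)‖ := norm_sub_le _ _
      _ ≤ (‖x i0‖ + ‖x i0 - (Matrix.toEuclideanCLM (𝕜 := ℝ) ρ (y i0) + c)‖)
          + ‖y i0‖ := by rw [hnormA]; exact add_le_add_left (norm_sub_le _ _) _
      _ ≤ R := by rw [hR]; linarith
  have hmem : (ρ, c) ∈ S := ⟨hρ, Metric.mem_closedBall.mpr (by simpa using hcb)⟩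
  have h1 : f p₀ ≤ f (ρ, c) := hmin hmem
  have h2 : f (ρ, c) < f p₀ := lt_of_lt_of_le hlt (by linarith)
  exact absurd (lt_of_le_of_lt h1 h2) (lt_irrefl _)
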